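/- Let A be a commutative ring that is universal for GE₂, i.e. the group K₂(2,A) is generated by the Steinberg symbols {v,u}, u, v ∈ A^×. Then the map x ↦ class of E₁₂(x) induces a group isomorphism A/M ≅ E₂(A)^ab ≅ H₁(E₂(A),ℤ). -/

import Mathlib

open Matrix

variable (A : Type*) [CommRing A]

/-- The elementary matrix `E₁₂(a) = [[1,a],[0,1]]` as an element of `GL₂(A)`. -/
def E12 (a : A) : GL (Fin 2) A :=
  ⟨!![1, a; 0, 1], !![1, -a; 0, 1],
    by rw [Matrix.mul_fin_two, Matrix.one_fin_two]; ring_nf,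
    by rw [Matrix.mul_fin_two, Matrix.one_fin_two]; ring_nf⟩

/-- The elementary matrix `E₂₁(a) = [[1,0],[a,1]]` as an element of `GL₂(A)`. -/
def E21 (a : A) : GL (Fin 2) A :=
  ⟨!![1, 0; a, 1], !![1, 0; -a, 1],
    by rw [Matrix.mul_fin_two, Matrix.one_fin_two]; ring_nf,
    by rw [Matrix.mul_fin_two, Matrix.one_fin_two]; ring_nf⟩

/-- `E₂(A)`: the subgroup of `GL₂(A)` generated by the elementary matrices. -/
def EE2 : Subgroup (GL (Fin 2) A) :=
  Subgroup.closure (Set.range (E12 A) ∪ Set.range (E21 A))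

variable {A}

lemma E12_mem (a : A) : E12 A a ∈ EE2 A :=
  Subgroup.subset_closure (Or.inl ⟨a, rfl⟩)

lemma E21_mem (a : A) : E21 A a ∈ EE2 A :=
  Subgroup.subset_closure (Or.inr ⟨a, rfl⟩)

variable (A)

/-- The subgroup `M ⊆ A` generated by the elements `x(a²−1)` and `3(b+1)(c+1)`,
for `x ∈ A` and units `a, b, c`. -/
def Msub : AddSubgroup A :=
  AddSubgroup.closure
    ({z : A | ∃ (x : A) (a : Aˣ), z = x * ((a : A) ^ 2 - 1)} ∪
     {z : A | ∃ b c : Aˣ, z = 3 * ((b : A) + 1) * ((c : A) + 1)})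

namespace Steinberg2


/-- `w₁₂(u)` as a word in the free group on the generators `x₁₂(r) = inl r`,
`x₂₁(r) = inr r`. -/
def fw12 (u : Aˣ) : FreeGroup (A ⊕ A) :=
  FreeGroup.of (Sum.inl (u : A)) * FreeGroup.of (Sum.inr (-((u⁻¹ : Aˣ) : A))) *
    FreeGroup.of (Sum.inl (u : A))

/-- `w₂₁(u)` as a word in the free group on the generators. -/
def fw21 (u : Aˣ) : FreeGroup (A ⊕ A) :=
  FreeGroup.of (Sum.inr (u : A)) * FreeGroup.of (Sum.inl (-((u⁻¹ : Aˣ) : A))) *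
    FreeGroup.of (Sum.inr (u : A))

/-- The Steinberg relations for `St(2,A)`. -/
def StRels : Set (FreeGroup (A ⊕ A)) :=
  {r | ∃ x y : A, r = FreeGroup.of (Sum.inl x) * FreeGroup.of (Sum.inl y) *
        (FreeGroup.of (Sum.inl (x + y)))⁻¹} ∪
  {r | ∃ x y : A, r = FreeGroup.of (Sum.inr x) * FreeGroup.of (Sum.inr y) *
        (FreeGroup.of (Sum.inr (x + y)))⁻¹} ∪
  {r | ∃ (u : Aˣ) (x : A), r = fw12 A u * FreeGroup.of (Sum.inr x) * (fw12 A u)⁻¹ *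
        (FreeGroup.of (Sum.inl (-(u : A) ^ 2 * x)))⁻¹} ∪
  {r | ∃ (u : Aˣ) (x : A), r = fw21 A u * FreeGroup.of (Sum.inl x) * (fw21 A u)⁻¹ *
        (FreeGroup.of (Sum.inr (-(u : A) ^ 2 * x)))⁻¹}

/-- The rank two Steinberg group `St(2,A)`. -/
def St2 : Type _ := PresentedGroup (StRels A)

instance : Group (St2 A) := by unfold St2; infer_instance

/-- The generator `x₁₂(r)` of `St(2,A)`. -/
def stx12 (r : A) : St2 A := PresentedGroup.of (Sum.inl r)

/-- The generator `x₂₁(r)` of `St(2,A)`. -/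
def stx21 (r : A) : St2 A := PresentedGroup.of (Sum.inr r)

/-- `w₁₂(u) ∈ St(2,A)`. -/
def stw12 (u : Aˣ) : St2 A := stx12 A (u : A) * stx21 A (-((u⁻¹ : Aˣ) : A)) * stx12 A (u : A)

/-- `h₁₂(u) := w₁₂(u)w₁₂(−1) ∈ St(2,A)`. -/
def sth12 (u : Aˣ) : St2 A := stw12 A u * stw12 A (-1)

/-- The Steinberg symbol `{v,u} := h₁₂(uv)h₁₂(u)⁻¹h₁₂(v)⁻¹ ∈ St(2,A)`. -/
def stSymbol (v u : Aˣ) : St2 A := sth12 A (u * v) * (sth12 A u)⁻¹ * (sth12 A v)⁻¹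

end Steinberg2

namespace K2Aux
variable {A}

lemma gl12_mul (x y : A) : E12 A x * E12 A y = E12 A (x + y) := by
  ext i j
  fin_cases i <;> fin_cases j <;>
    simp [E12, Units.val_mul, Matrix.mul_apply, Fin.sum_univ_succ] <;> ring

def glw12 (u : Aˣ) : GL (Fin 2) A :=
  E12 A (u : A) * E21 A (-((u⁻¹ : Aˣ) : A)) * E12 A (u : A)

def glw21 (u : Aˣ) : GL (Fin 2) A :=
  E21 A (u : A) * E12 A (-((u⁻¹ : Aˣ) : A)) * E21 A (u : A)

lemma glw12_conj (u : Aˣ) (x : A) :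
    glw12 u * E21 A x = E12 A (-(u : A) ^ 2 * x) * glw12 u := by
  have hu : (u : A) * ((u⁻¹ : Aˣ) : A) = 1 := Units.mul_inv u
  ext i j
  fin_cases i <;> fin_cases j <;>
    simp [glw12, E12, E21, Units.val_mul, Matrix.mul_apply, Fin.sum_univ_succ]
  linear_combination (-((u:A))*x) * hu

lemma glw21_conj (u : Aˣ) (x : A) :
    glw21 u * E12 A x = E21 A (-(u : A) ^ 2 * x) * glw21 u := by
  have hu : (u : A) * ((u⁻¹ : Aˣ) : A) = 1 := Units.mul_inv u
  ext i j
  fin_cases i <;> fin_cases j <;>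
    simp [glw21, E12, E21, Units.val_mul, Matrix.mul_apply, Fin.sum_univ_succ]
  linear_combination (-((u:A))*x) * hu

def g12 (x : A) : ↥(EE2 A) := ⟨E12 A x, E12_mem x⟩
def g21 (x : A) : ↥(EE2 A) := ⟨E21 A x, E21_mem x⟩

lemma g12_mul (x y : A) : g12 x * g12 y = g12 (x + y) := Subtype.ext (gl12_mul x y)

def gw12 (u : Aˣ) : ↥(EE2 A) :=
  ⟨glw12 u, mul_mem (mul_mem (E12_mem _) (E21_mem _)) (E12_mem _)⟩
def gw21 (u : Aˣ) : ↥(EE2 A) :=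
  ⟨glw21 u, mul_mem (mul_mem (E21_mem _) (E12_mem _)) (E21_mem _)⟩

lemma gw12_conj (u : Aˣ) (x : A) :
    gw12 u * g21 x = g12 (-(u : A) ^ 2 * x) * gw12 u := Subtype.ext (glw12_conj u x)
lemma gw21_conj (u : Aˣ) (x : A) :
    gw21 u * g12 x = g21 (-(u : A) ^ 2 * x) * gw21 u := Subtype.ext (glw21_conj u x)

lemma ab_conj {G : Type*} [Group G] {g₁ g₂ w : G} (h : g₁ * w = w * g₂) :
    Abelianization.of g₁ = Abelianization.of g₂ := by
  have := congrArg (Abelianization.of (G := G)) h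
  simp only [_root_.map_mul] at this
  rw [mul_comm (Abelianization.of w)] at this
  exact mul_right_cancel this

lemma of_g21 (x : A) :
    Abelianization.of (g21 x) = Abelianization.of (g12 (-x)) := by
  have h := gw12_conj (A := A) 1 x
  have : g12 (-x) * gw12 1 = gw12 1 * g21 x := by
    rw [h]; norm_num
  exact (ab_conj this).symm

lemma of_g12_sq (u : Aˣ) (x : A) :
    Abelianization.of (g12 x) = Abelianization.of (g12 ((u : A) ^ 2 * x)) := by
  have h1 : Abelianization.of (g12 x) = Abelianization.of (g21 (-(u:A)^2 * x)) :=
    (ab_conj (gw21_conj u x).symm).symm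
  rw [h1, of_g21]; ring_nf


/-- The additive map `x ↦ [E₁₂(x)] ∈ E₂(A)ᵃᵇ`. -/
def eAdd : A →+ Additive (Abelianization ↥(EE2 A)) :=
  AddMonoidHom.mk' (fun x => Additive.ofMul (Abelianization.of (g12 x)))
    (fun a b => by
      show Additive.ofMul (Abelianization.of (g12 (a+b))) = _
      rw [← g12_mul, _root_.map_mul]; rfl)

lemma eAdd_apply (x : A) : eAdd x = Additive.ofMul (Abelianization.of (g12 x)) := rfl

lemma eAdd_sq (x : A) (a : Aˣ) : eAdd (x * ((a : A) ^ 2 - 1)) = 0 := by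
  have h : eAdd ((a : A) ^ 2 * x) = eAdd x := by
    rw [eAdd_apply, eAdd_apply, ← of_g12_sq]
  have hx : x * ((a : A) ^ 2 - 1) = (a : A) ^ 2 * x - x := by ring
  rw [hx, map_sub, h, sub_self]

end K2Aux

namespace K2Aux
open Steinberg2
variable {A}

lemma mem_M1 (x : A) (a : Aˣ) : x * ((a : A) ^ 2 - 1) ∈ Msub A :=
  AddSubgroup.subset_closure (Or.inl ⟨x, a, rfl⟩)

lemma mem_M2 (b c : Aˣ) : 3 * ((b : A) + 1) * ((c : A) + 1) ∈ Msub A :=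
  AddSubgroup.subset_closure (Or.inr ⟨b, c, rfl⟩)

/-- The generator assignment for the abelian representation `θ`. -/
def θf : A ⊕ A → Multiplicative (A ⧸ Msub A) :=
  Sum.elim (fun x => Multiplicative.ofAdd (QuotientAddGroup.mk x))
    (fun x => Multiplicative.ofAdd (QuotientAddGroup.mk (-x)))

lemma θf_rels : ∀ r ∈ StRels A, FreeGroup.lift (θf (A := A)) r = 1 := by
  rintro r (((⟨x, y, rfl⟩ | ⟨x, y, rfl⟩) | ⟨u, x, rfl⟩) | ⟨u, x, rfl⟩) <;>
    simp only [fw12, fw21, _root_.map_mul, map_inv, FreeGroup.lift_apply_of, θf, Sum.elim_inl,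
      Sum.elim_inr, ← ofAdd_add, ← ofAdd_neg, ofAdd_eq_one, ← QuotientAddGroup.mk_add,
      ← QuotientAddGroup.mk_neg, QuotientAddGroup.eq_zero_iff] <;>
    ring_nf
  · exact zero_mem _
  · exact zero_mem _
  · rw [show ((u:A) ^ 2 * x - x) = x * ((u:A) ^ 2 - 1) by ring]; exact mem_M1 x u
  · rw [show (-((u:A) ^ 2 * x) + x) = (-x) * ((u:A) ^ 2 - 1) by ring]; exact mem_M1 (-x) u

/-- The abelian representation `θ : St(2,A) → A/M` (written multiplicatively). -/
def θSt : St2 A →* Multiplicative (A ⧸ Msub A) :=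
  PresentedGroup.toGroup θf_rels

lemma θSt_x12 (r : A) : θSt (stx12 A r) = Multiplicative.ofAdd (QuotientAddGroup.mk r) :=
  PresentedGroup.toGroup.of θf_rels

lemma θSt_x21 (r : A) : θSt (stx21 A r) = Multiplicative.ofAdd (QuotientAddGroup.mk (-r)) :=
  PresentedGroup.toGroup.of θf_rels

/-- Multiplicative version of `eAdd`. -/
def emh : Multiplicative A →* Abelianization ↥(EE2 A) :=
  MonoidHom.mk' (fun x => Abelianization.of (g12 (Multiplicative.toAdd x)))
    (fun a b => by
      show Abelianization.of (g12 (Multiplicative.toAdd a + Multiplicative.toAdd b)) = _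
      rw [← g12_mul, _root_.map_mul])

lemma emh_of_g21 (r : A) :
    Abelianization.of (g21 r) = emh (Multiplicative.ofAdd (-r)) := of_g21 r

lemma emh_eq_one (x : A) (h : x ∈ Msub A) (hsym : ∀ b c : Aˣ,
    emh (Multiplicative.ofAdd (3 * ((b : A) + 1) * ((c : A) + 1))) = 1) :
    emh (Multiplicative.ofAdd x) = 1 := by
  induction h using AddSubgroup.closure_induction with
  | mem z hz =>
      rcases hz with ⟨y, a, rfl⟩ | ⟨b, c, rfl⟩
      · exact congrArg Additive.toMul (eAdd_sq y a)
      · exact hsym b c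
  | zero => exact congrArg Additive.toMul (map_zero (eAdd (A := A)))
  | add a b _ _ ha hb => rw [ofAdd_add, _root_.map_mul, ha, hb, one_mul]
  | neg a _ ha => rw [ofAdd_neg, map_inv, ha, inv_one]


lemma of_g12_mul (a b : A) :
    Abelianization.of (g12 a) * Abelianization.of (g12 b) = Abelianization.of (g12 (a + b)) := by
  rw [← _root_.map_mul, g12_mul]

lemma of_g12_inv (a : A) :
    (Abelianization.of (g12 a))⁻¹ = Abelianization.of (g12 (-a)) := by
  rw [inv_eq_iff_mul_eq_one, of_g12_mul]
  rw [show a + -a = 0 by ring]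
  have : g12 (0 : A) = 1 := Subtype.ext (by ext i j; fin_cases i <;> fin_cases j <;> simp [g12, E12])
  rw [this, _root_.map_one]

lemma key_sym {π : St2 A →* ↥(EE2 A)}
    (hπ12 : ∀ r : A, π (stx12 A r) = g12 r)
    (hπ21 : ∀ r : A, π (stx21 A r) = g21 r)
    (huniv : π.ker = Subgroup.closure {s : St2 A | ∃ u v : Aˣ, s = stSymbol A v u})
    (b c : Aˣ) :
    Abelianization.of (g12 (3 * ((b : A) + 1) * ((c : A) + 1))) = 1 := by
  set u : Aˣ := -b with hub
  set v : Aˣ := -c with hvc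
  have hsym : stSymbol A v u ∈ π.ker :=
    huniv ▸ Subgroup.subset_closure ⟨u, v, rfl⟩
  have hF : Abelianization.of (π (stSymbol A v u)) = 1 := by
    rw [MonoidHom.mem_ker.mp hsym, _root_.map_one]
  rw [show (π (stSymbol A v u)) = π (stSymbol A v u) from rfl] at hF
  simp only [stSymbol, sth12, stw12, _root_.map_mul, map_inv, hπ12, hπ21, of_g21,
    _root_.mul_inv_rev, Units.val_mul, Units.val_neg, Units.val_one, inv_neg, inv_one,
    neg_neg, of_g12_inv, of_g12_mul] at hF
  have hp : ((u⁻¹ : Aˣ) : A) * (u : A) = 1 := Units.inv_mul u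
  have hq : ((v⁻¹ : Aˣ) : A) * (v : A) = 1 := Units.inv_mul v
  rw [show ((u:A) * ↑v + ↑v⁻¹ * ↑u⁻¹ + ↑u * ↑v + (-1 + -1 + -1) +
      (1 + (1 + 1) + (-↑u + (-↑u⁻¹ + -↑u))) + (1 + (1 + 1) + (-↑v + (-↑v⁻¹ + -↑v)))) =
      2*(u:A)*↑v + ↑u⁻¹*↑v⁻¹ + 3 - 2*↑u - ↑u⁻¹ - 2*↑v - ↑v⁻¹ by ring] at hF
  have hb : ((b : Aˣ) : A) = -(u : A) := by rw [hub]; simp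
  have hc : ((c : Aˣ) : A) = -(v : A) := by rw [hvc]; simp
  rw [hb, hc]
  have hE : eAdd (2*(u:A)*↑v + ↑u⁻¹*↑v⁻¹ + 3 - 2*↑u - ↑u⁻¹ - 2*↑v - ↑v⁻¹) = 0 :=
    congrArg Additive.ofMul hF
  have hm1 : eAdd ((-((u⁻¹:Aˣ):A) * (((v⁻¹:Aˣ):A) - 1)) * ((u:A)^2 - 1)) = 0 := eAdd_sq _ u
  have hm2 : eAdd ((-((u:A) - 1) * ((v⁻¹:Aˣ):A)) * ((v:A)^2 - 1)) = 0 := eAdd_sq _ v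
  have hXE : 3 * (-(u:A) + 1) * (-(v:A) + 1) =
      (2*(u:A)*↑v + ↑u⁻¹*↑v⁻¹ + 3 - 2*↑u - ↑u⁻¹ - 2*↑v - ↑v⁻¹)
      - (-((u⁻¹:Aˣ):A) * (((v⁻¹:Aˣ):A) - 1)) * ((u:A)^2 - 1)
      - (-((u:A) - 1) * ((v⁻¹:Aˣ):A)) * ((v:A)^2 - 1) := by
    linear_combination (-(((v⁻¹:Aˣ):A) - 1) * (u:A)) * hp + (-((u:A) - 1) * (v:A)) * hq
  have : eAdd (3 * (-(u:A) + 1) * (-(v:A) + 1)) = 0 := by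
    rw [hXE, map_sub, map_sub, hE, hm1, hm2, sub_zero, sub_zero]
  exact congrArg Additive.toMul this

lemma θSt_symbol (u v : Aˣ) : θSt (stSymbol A v u) = 1 := by
  simp only [stSymbol, sth12, stw12, _root_.map_mul, map_inv, θSt_x12, θSt_x21,
    Units.val_mul, _root_.mul_inv_rev, Units.val_neg, Units.val_one, inv_neg, inv_one,
    neg_neg, ← ofAdd_neg, ← ofAdd_add, ← QuotientAddGroup.mk_neg, ← QuotientAddGroup.mk_add,
    ofAdd_eq_one, QuotientAddGroup.eq_zero_iff]
  have hp : ((u⁻¹ : Aˣ) : A) * (u : A) = 1 := Units.inv_mul u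
  have hq : ((v⁻¹ : Aˣ) : A) * (v : A) = 1 := Units.inv_mul v
  rw [show ((u:A) * ↑v + ↑v⁻¹ * ↑u⁻¹ + ↑u * ↑v + (-1 + -1 + -1) +
      (1 + (1 + 1) + (-↑u + (-↑u⁻¹ + -↑u))) + (1 + (1 + 1) + (-↑v + (-↑v⁻¹ + -↑v)))) =
      3 * (((-u : Aˣ) : A) + 1) * (((-v : Aˣ) : A) + 1)
      + (-((u⁻¹:Aˣ):A) * (((v⁻¹:Aˣ):A) - 1)) * ((u:A)^2 - 1)
      + (-((u:A) - 1) * ((v⁻¹:Aˣ):A)) * ((v:A)^2 - 1) by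
    simp only [Units.val_neg]
    linear_combination (((( v⁻¹:Aˣ):A) - 1) * (u:A)) * hp + (((u:A) - 1) * (v:A)) * hq]
  exact add_mem (add_mem (mem_M2 (-u) (-v)) (mem_M1 _ u)) (mem_M1 _ v)

lemma pi_surj {π : St2 A →* ↥(EE2 A)}
    (hπ12 : ∀ r : A, π (stx12 A r) = g12 r)
    (hπ21 : ∀ r : A, π (stx21 A r) = g21 r) :
    Function.Surjective π := by
  rintro ⟨x, hx⟩
  have key : ∀ (y : GL (Fin 2) A), y ∈ EE2 A →
      ∃ s : St2 A, ((π s : ↥(EE2 A)) : GL (Fin 2) A) = y := by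
    intro y hy
    have hy' : y ∈ Subgroup.closure (Set.range (E12 A) ∪ Set.range (E21 A)) := hy
    clear hy
    induction hy' using Subgroup.closure_induction with
    | mem z hz =>
        rcases hz with ⟨r, rfl⟩ | ⟨r, rfl⟩
        · exact ⟨stx12 A r, by rw [hπ12]; rfl⟩
        · exact ⟨stx21 A r, by rw [hπ21]; rfl⟩
    | one => exact ⟨1, by rw [_root_.map_one]; rfl⟩
    | mul a b _ _ ha hb =>
        obtain ⟨s, hs⟩ := ha; obtain ⟨t, ht⟩ := hb
        exact ⟨s * t, by rw [_root_.map_mul]; rw [← hs, ← ht]; rfl⟩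
    | inv a _ ha =>
        obtain ⟨s, hs⟩ := ha
        exact ⟨s⁻¹, by rw [map_inv]; rw [← hs]; rfl⟩
  obtain ⟨s, hs⟩ := key x hx
  exact ⟨s, Subtype.ext hs⟩

end K2Aux


open Steinberg2 in
/-- If `A` is universal for `GE₂`, i.e. the kernel `K₂(2,A)` of the
canonical homomorphism `St(2,A) → E₂(A)` is generated by the Steinberg symbols, then
`x ↦ [E₁₂(x)]` induces an isomorphism `A/M ≅ E₂(A)ᵃᵇ ≅ H₁(E₂(A), ℤ)`. -/
theorem h1_E2_of_universal_GE2
    (A : Type*) [CommRing A]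
    (π : St2 A →* ↥(EE2 A))
    (hπ12 : ∀ r : A, π (stx12 A r) = (⟨E12 A r, E12_mem r⟩ : ↥(EE2 A)))
    (hπ21 : ∀ r : A, π (stx21 A r) = (⟨E21 A r, E21_mem r⟩ : ↥(EE2 A)))
    (huniv : π.ker = Subgroup.closure {s : St2 A | ∃ u v : Aˣ, s = stSymbol A v u}) :
    ∃ ψ : (A ⧸ Msub A) ≃+ Additive (Abelianization ↥(EE2 A)),
      ∀ x : A, ψ (QuotientAddGroup.mk x) =
        Additive.ofMul (Abelianization.of (⟨E12 A x, E12_mem x⟩ : ↥(EE2 A))) := by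
  classical
  have hπ12' : ∀ r : A, π (stx12 A r) = K2Aux.g12 r := hπ12
  have hπ21' : ∀ r : A, π (stx21 A r) = K2Aux.g21 r := hπ21
  -- the forward map
  have hMker : ∀ x ∈ Msub A, K2Aux.eAdd x = 0 := by
    intro x hx
    have h1 : K2Aux.emh (Multiplicative.ofAdd x) = 1 :=
      K2Aux.emh_eq_one x hx (fun b c => K2Aux.key_sym hπ12' hπ21' huniv b c)
    exact congrArg Additive.ofMul h1
  set φb : (A ⧸ Msub A) →+ Additive (Abelianization ↥(EE2 A)) :=
    QuotientAddGroup.lift (Msub A) K2Aux.eAdd hMker with hφb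
  have hφbmk : ∀ x : A, φb (QuotientAddGroup.mk x) = K2Aux.eAdd x := fun x => rfl
  -- the backward map
  have hsurj : Function.Surjective π := K2Aux.pi_surj hπ12' hπ21'
  have hker : ∀ s ∈ π.ker, K2Aux.θSt s = 1 := by
    intro s hs
    rw [huniv] at hs
    induction hs using Subgroup.closure_induction with
    | mem z hz => obtain ⟨u, v, rfl⟩ := hz; exact K2Aux.θSt_symbol u v
    | one => exact _root_.map_one _
    | mul a b _ _ ha hb => rw [_root_.map_mul, ha, hb, one_mul]
    | inv a _ ha => rw [map_inv, ha, inv_one]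
  set e := QuotientGroup.quotientKerEquivOfSurjective π hsurj with he
  set θbar : ↥(EE2 A) →* Multiplicative (A ⧸ Msub A) :=
    (QuotientGroup.lift π.ker K2Aux.θSt hker).comp e.symm.toMonoidHom with hθbar
  have hθπ : ∀ s : St2 A, θbar (π s) = K2Aux.θSt s := by
    intro s
    have h1 : e (QuotientGroup.mk s) = π s := rfl
    have h2 : e.symm (π s) = QuotientGroup.mk s := by
      rw [← h1, MulEquiv.symm_apply_apply]
    rw [hθbar, MonoidHom.comp_apply, MulEquiv.coe_toMonoidHom, h2]
    exact QuotientGroup.lift_mk (φ := K2Aux.θSt) (HN := hker) (g := s)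
  set ψ' : Abelianization ↥(EE2 A) →* Multiplicative (A ⧸ Msub A) :=
    Abelianization.lift θbar with hψ'
  set φmul : Multiplicative (A ⧸ Msub A) →* Abelianization ↥(EE2 A) :=
    MonoidHom.mk' (fun q => Additive.toMul (φb (Multiplicative.toAdd q)))
      (fun a b => congrArg Additive.toMul (φb.map_add _ _)) with hφmul
  -- round trip on the abelianization
  have hH : φmul.comp K2Aux.θSt = (Abelianization.of).comp π := by
    apply PresentedGroup.ext
    rintro (r | r)
    · show φmul (K2Aux.θSt (stx12 A r)) = Abelianization.of (π (stx12 A r))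
      rw [K2Aux.θSt_x12, hπ12']
      show Additive.toMul (φb (QuotientAddGroup.mk r)) = _
      rw [hφbmk]
      rfl
    · show φmul (K2Aux.θSt (stx21 A r)) = Abelianization.of (π (stx21 A r))
      rw [K2Aux.θSt_x21, hπ21']
      show Additive.toMul (φb (QuotientAddGroup.mk (-r))) = _
      rw [hφbmk, K2Aux.of_g21]
      rfl
  have hround : ∀ z : Abelianization ↥(EE2 A), φmul (ψ' z) = z := by
    have : (φmul.comp ψ') = MonoidHom.id _ := by
      apply Abelianization.hom_ext
      ext g
      show φmul (ψ' (Abelianization.of g)) = Abelianization.of g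
      obtain ⟨s, rfl⟩ := hsurj g
      rw [hψ', Abelianization.lift_apply_of, hθπ]
      exact DFunLike.congr_fun hH s
    exact fun z => DFunLike.congr_fun this z
  refine ⟨{ toFun := fun q => φb q,
            invFun := fun g => Multiplicative.toAdd (ψ' (Additive.toMul g)),
            left_inv := ?_, right_inv := ?_, map_add' := φb.map_add }, ?_⟩
  · intro q
    induction q using QuotientAddGroup.induction_on with
    | H x =>
      show Multiplicative.toAdd (ψ' (Additive.toMul (φb ((x : A ⧸ Msub A))))) = _
      rw [hφbmk x]
      show Multiplicative.toAdd (ψ' (Abelianization.of (K2Aux.g12 x))) = _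
      rw [hψ', Abelianization.lift_apply_of, ← hπ12', hθπ, K2Aux.θSt_x12]
      rfl
  · intro g
    exact congrArg Additive.ofMul (hround (Additive.toMul g))
  · intro x
    exact hφbmk x
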